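/- Let Â := M⁻¹N and σ̂² := (⟨x, x⟩ − ∑_{l,l'} N_l (M⁻¹)_{l'l} N_{l'}) / n, and assume σ̂² > 0. Then (Â, σ̂²) is a global maximizer of the likelihood Λ over ℝ^L × (0, ∞): for all A ∈ ℝ^L and all σ² > 0, Λ(A, σ²) ≤ Λ(Â, σ̂²). -/

import Mathlib

open Real BigOperators

theorem exp2_aux (n L : ℕ) (h : Fin L → Fin n → ℝ) (u : Fin n → ℝ) (B : Fin L → ℝ) :
    (∑ t, (u t - ∑ l, B l * h l t) * (u t - ∑ l, B l * h l t))
    = (∑ t, u t * u t) - 2 * (∑ l, B l * ∑ t, u t * h l t)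
      + ∑ l, ∑ l', B l * B l' * ∑ t, h l t * h l' t := by
  have e1 : ∀ t : Fin n, (u t - ∑ l, B l * h l t) * (u t - ∑ l, B l * h l t)
      = u t * u t - 2 * (∑ l, B l * (u t * h l t))
        + ∑ l, ∑ l', B l * B l' * (h l t * h l' t) := by
    intro t
    have sq : (∑ l, B l * h l t) * (∑ l', B l' * h l' t)
        = ∑ l, ∑ l', B l * B l' * (h l t * h l' t) := by
      rw [Finset.sum_mul_sum]
      exact Finset.sum_congr rfl fun l _ => Finset.sum_congr rfl fun l' _ => by ring
    have cr : u t * (∑ l, B l * h l t) = ∑ l, B l * (u t * h l t) := by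
      rw [Finset.mul_sum]
      exact Finset.sum_congr rfl fun l _ => by ring
    calc (u t - ∑ l, B l * h l t) * (u t - ∑ l, B l * h l t)
        = u t * u t - 2 * (u t * (∑ l, B l * h l t))
          + (∑ l, B l * h l t) * (∑ l', B l' * h l' t) := by ring
      _ = _ := by rw [sq, cr]
  rw [Finset.sum_congr rfl fun t _ => e1 t]
  rw [Finset.sum_add_distrib, Finset.sum_sub_distrib]
  congr 1
  · congr 1
    calc ∑ t, 2 * ∑ l, B l * (u t * h l t)
        = ∑ t, ∑ l, 2 * (B l * (u t * h l t)) :=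
          Finset.sum_congr rfl fun t _ => by rw [Finset.mul_sum]
      _ = ∑ l, ∑ t, 2 * (B l * (u t * h l t)) := Finset.sum_comm
      _ = ∑ l, 2 * (B l * ∑ t, u t * h l t) := by
          refine Finset.sum_congr rfl fun l _ => ?_
          rw [Finset.mul_sum, Finset.mul_sum]
      _ = 2 * ∑ l, B l * ∑ t, u t * h l t := by rw [Finset.mul_sum]
  · rw [Finset.sum_comm]
    refine Finset.sum_congr rfl fun l _ => ?_
    rw [Finset.sum_comm]
    refine Finset.sum_congr rfl fun l' _ => ?_
    rw [Finset.mul_sum]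

theorem analytic_aux (nn s v Qa : ℝ) (hn : 0 < nn) (hs : 0 < s) (hv : 0 < v)
    (hQ : nn * s ≤ Qa) :
    (2 * Real.pi * v) ^ (-nn/2) * Real.exp (-Qa/(2*v)) ≤
      (2 * Real.pi * s) ^ (-nn/2) * Real.exp (-(nn*s)/(2*s)) := by
  have h2pv : (0:ℝ) < 2 * Real.pi * v := by positivity
  have h2ps : (0:ℝ) < 2 * Real.pi * s := by positivity
  have hLpos : (0:ℝ) < (2 * Real.pi * v) ^ (-nn/2) * Real.exp (-Qa/(2*v)) :=
    mul_pos (Real.rpow_pos_of_pos h2pv _) (Real.exp_pos _)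
  have hRpos : (0:ℝ) < (2 * Real.pi * s) ^ (-nn/2) * Real.exp (-(nn*s)/(2*s)) :=
    mul_pos (Real.rpow_pos_of_pos h2ps _) (Real.exp_pos _)
  rw [← Real.log_le_log_iff hLpos hRpos]
  rw [Real.log_mul (Real.rpow_pos_of_pos h2pv _).ne' (Real.exp_ne_zero _),
      Real.log_mul (Real.rpow_pos_of_pos h2ps _).ne' (Real.exp_ne_zero _),
      Real.log_rpow h2pv, Real.log_rpow h2ps, Real.log_exp, Real.log_exp,
      Real.log_mul (by positivity : (2*Real.pi : ℝ) ≠ 0) hv.ne',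
      Real.log_mul (by positivity : (2*Real.pi : ℝ) ≠ 0) hs.ne']
  have hu : 1 - s/v ≤ Real.log v - Real.log s := by
    have h1 : Real.log (s/v) ≤ s/v - 1 := Real.log_le_sub_one_of_pos (by positivity)
    rw [Real.log_div hs.ne' hv.ne'] at h1
    linarith
  have h3 : nn*s/(2*v) ≤ Qa/(2*v) := by gcongr
  have h4 : nn/2 * (1 - s/v) ≤ nn/2 * (Real.log v - Real.log s) :=
    mul_le_mul_of_nonneg_left hu (by positivity)
  have h5 : nn/2 * (1 - s/v) = nn/2 - nn*s/(2*v) := by field_simp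
  have h6 : (nn*s)/(2*s) = nn/2 := by field_simp
  have h10 : -(nn*s) / (2*s) = -(nn*s/(2*s)) := by ring
  have h11 : -Qa / (2*v) = -(Qa/(2*v)) := by ring
  linarith [h3, h4, h5, h6, h10, h11]

/-- (Â, σ̂²) is a global maximizer of the Gaussian likelihood over
ℝ^L × (0, ∞). -/
theorem gaussian_likelihood_joint_max
    (n L : ℕ) (x : Fin n → ℝ) (h : Fin L → Fin n → ℝ)
    (ip : (Fin n → ℝ) → (Fin n → ℝ) → ℝ)
    (hip : ip = fun u v => ∑ t, u t * v t)
    (N : Fin L → ℝ) (hN : N = fun l => ip x (h l))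
    (M : Matrix (Fin L) (Fin L) ℝ) (hM : M = fun l l' => ip (h l) (h l'))
    (hMpd : M.PosDef)
    (Λ : (Fin L → ℝ) → ℝ → ℝ)
    (hΛ : Λ = fun A σ2 => (2 * Real.pi * σ2) ^ (-(n : ℝ) / 2) *
        Real.exp (-(ip (fun t => x t - ∑ l, A l * h l t)
                       (fun t => x t - ∑ l, A l * h l t)) / (2 * σ2)))
    (Ahat : Fin L → ℝ) (hAhat : Ahat = fun l => ∑ l', M⁻¹ l' l * N l')
    (σhat2 : ℝ)
    (hσhat2 : σhat2 = (ip x x - ∑ l, ∑ l', N l * M⁻¹ l' l * N l') / n)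
    (hσhat2pos : 0 < σhat2) :
    ∀ (A : Fin L → ℝ) (σ2 : ℝ), 0 < σ2 → Λ A σ2 ≤ Λ Ahat σhat2 := by
  intro A σ2 hσ2
  have hNl : ∀ l, N l = ∑ t, x t * h l t := fun l => by rw [hN, hip]
  have hMl : ∀ l l', M l l' = ∑ t, h l t * h l' t := fun l l' => by rw [hM, hip]
  have hΛeq : ∀ (A' : Fin L → ℝ) (v : ℝ), Λ A' v = (2 * Real.pi * v) ^ (-(n:ℝ)/2) *
      Real.exp (-(∑ t, (x t - ∑ l, A' l * h l t) * (x t - ∑ l, A' l * h l t)) / (2*v)) := by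
    intro A' v
    simp only [hΛ, hip]
  have hn : 0 < (n:ℝ) := by
    rcases Nat.eq_zero_or_pos n with h0 | h0
    · rw [hσhat2, h0] at hσhat2pos
      norm_num at hσhat2pos
    · exact_mod_cast h0
  have hdet : IsUnit M.det := isUnit_iff_ne_zero.mpr hMpd.det_pos.ne'
  have hinv : M⁻¹ * M = 1 := Matrix.nonsing_inv_mul M hdet
  have key1 : ∀ l, ∑ l', Ahat l' * M l' l = N l := by
    intro l
    have h1 : ∀ k : Fin L, ∑ l', M⁻¹ k l' * M l' l = (1 : Matrix (Fin L) (Fin L) ℝ) k l := by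
      intro k; rw [← hinv, Matrix.mul_apply]
    calc ∑ l', Ahat l' * M l' l
        = ∑ l', ∑ k, M⁻¹ k l' * N k * M l' l := by
          refine Finset.sum_congr rfl fun l' _ => ?_
          simp only [hAhat]
          rw [Finset.sum_mul]
      _ = ∑ k, ∑ l', M⁻¹ k l' * N k * M l' l := Finset.sum_comm
      _ = ∑ k, N k * ∑ l', M⁻¹ k l' * M l' l := by
          refine Finset.sum_congr rfl fun k _ => ?_
          rw [Finset.mul_sum]
          exact Finset.sum_congr rfl fun l' _ => by ring
      _ = ∑ k, N k * (1 : Matrix (Fin L) (Fin L) ℝ) k l :=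
          Finset.sum_congr rfl fun k _ => by rw [h1]
      _ = N l := by simp [Matrix.one_apply]
  obtain ⟨u, hu⟩ : ∃ u : Fin n → ℝ, u = fun t => x t - ∑ l, Ahat l * h l t := ⟨_, rfl⟩
  obtain ⟨B, hB⟩ : ∃ B : Fin L → ℝ, B = fun l => A l - Ahat l := ⟨_, rfl⟩
  have cross : ∀ l, (∑ t, u t * h l t) = 0 := by
    intro l
    have e1 : ∑ t, u t * h l t
        = (∑ t, x t * h l t) - ∑ k, Ahat k * ∑ t, h k t * h l t := by
      calc ∑ t, u t * h l t
          = ∑ t, (x t * h l t - ∑ k, Ahat k * (h k t * h l t)) := by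
            refine Finset.sum_congr rfl fun t _ => ?_
            simp only [hu]
            rw [sub_mul, Finset.sum_mul]
            congr 1
            exact Finset.sum_congr rfl fun k _ => by ring
        _ = (∑ t, x t * h l t) - ∑ t, ∑ k, Ahat k * (h k t * h l t) :=
            Finset.sum_sub_distrib _ _
        _ = (∑ t, x t * h l t) - ∑ k, Ahat k * ∑ t, h k t * h l t := by
            congr 1
            rw [Finset.sum_comm]
            exact Finset.sum_congr rfl fun k _ => by rw [Finset.mul_sum]
    rw [e1]
    have e2 : ∑ k, Ahat k * ∑ t, h k t * h l t = ∑ k, Ahat k * M k l :=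
      Finset.sum_congr rfl fun k _ => by rw [hMl]
    rw [e2, key1 l, ← hNl l, sub_self]
  -- value at Ahat
  have hT : (∑ l, ∑ l', Ahat l * Ahat l' * ∑ t, h l t * h l' t)
      = ∑ l', Ahat l' * N l' := by
    calc ∑ l, ∑ l', Ahat l * Ahat l' * ∑ t, h l t * h l' t
        = ∑ l, ∑ l', Ahat l * Ahat l' * M l l' :=
          Finset.sum_congr rfl fun l _ => Finset.sum_congr rfl fun l' _ => by rw [hMl]
      _ = ∑ l', ∑ l, Ahat l * Ahat l' * M l l' := Finset.sum_comm
      _ = ∑ l', Ahat l' * ∑ l, Ahat l * M l l' := by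
          refine Finset.sum_congr rfl fun l' _ => ?_
          rw [Finset.mul_sum]
          exact Finset.sum_congr rfl fun l _ => by ring
      _ = ∑ l', Ahat l' * N l' := Finset.sum_congr rfl fun l' _ => by rw [key1]
  have hS : (∑ l', Ahat l' * N l') = ∑ l, ∑ l', N l * M⁻¹ l' l * N l' := by
    calc ∑ l', Ahat l' * N l'
        = ∑ l', ∑ k, M⁻¹ k l' * N k * N l' := by
          refine Finset.sum_congr rfl fun l' _ => ?_
          simp only [hAhat]
          rw [Finset.sum_mul]
      _ = ∑ l, ∑ l', N l * M⁻¹ l' l * N l' :=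
          Finset.sum_congr rfl fun l _ => Finset.sum_congr rfl fun l' _ => by ring
  have QAhat : (∑ t, (x t - ∑ l, Ahat l * h l t) * (x t - ∑ l, Ahat l * h l t))
      = (∑ t, x t * x t) - ∑ l, ∑ l', N l * M⁻¹ l' l * N l' := by
    rw [exp2_aux n L h x Ahat]
    have e3 : (∑ l, Ahat l * ∑ t, x t * h l t) = ∑ l', Ahat l' * N l' :=
      Finset.sum_congr rfl fun l _ => by rw [← hNl]
    rw [e3, hT, hS]
    ring
  have hQhat_val : (∑ t, (x t - ∑ l, Ahat l * h l t) * (x t - ∑ l, Ahat l * h l t))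
      = (n:ℝ) * σhat2 := by
    rw [QAhat, hσhat2]
    simp only [hip]
    rw [mul_div_cancel₀ _ hn.ne']
  -- value at A
  have hpt : ∀ t, u t - ∑ l, B l * h l t = x t - ∑ l, A l * h l t := by
    intro t
    simp only [hu, hB]
    have e4 : ∑ l, (A l - Ahat l) * h l t
        = (∑ l, A l * h l t) - ∑ l, Ahat l * h l t := by
      rw [← Finset.sum_sub_distrib]
      exact Finset.sum_congr rfl fun l _ => by ring
    rw [e4]; ring
  have QA : (∑ t, (x t - ∑ l, A l * h l t) * (x t - ∑ l, A l * h l t))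
      = (∑ t, u t * u t) + ∑ l, ∑ l', B l * B l' * M l l' := by
    have lhs_eq : (∑ t, (u t - ∑ l, B l * h l t) * (u t - ∑ l, B l * h l t))
        = ∑ t, (x t - ∑ l, A l * h l t) * (x t - ∑ l, A l * h l t) :=
      Finset.sum_congr rfl fun t _ => by rw [hpt]
    rw [← lhs_eq, exp2_aux n L h u B]
    have c0 : (∑ l, B l * ∑ t, u t * h l t) = 0 := by
      simp [cross]
    rw [c0, mul_zero, sub_zero]
    congr 1
    exact Finset.sum_congr rfl fun l _ => Finset.sum_congr rfl fun l' _ => by rw [hMl]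
  have huu : (∑ t, u t * u t)
      = ∑ t, (x t - ∑ l, Ahat l * h l t) * (x t - ∑ l, Ahat l * h l t) :=
    Finset.sum_congr rfl fun t _ => by simp only [hu]
  have hBMB : 0 ≤ ∑ l, ∑ l', B l * B l' * M l l' := by
    have h0 : 0 ≤ dotProduct B (M.mulVec B) := by
      simpa using hMpd.posSemidef.dotProduct_mulVec_nonneg B
    have h2 : dotProduct B (M.mulVec B) = ∑ l, ∑ l', B l * B l' * M l l' := by
      simp only [dotProduct, Matrix.mulVec, Finset.mul_sum]
      exact Finset.sum_congr rfl fun l _ => Finset.sum_congr rfl fun l' _ => by ring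
    rwa [h2] at h0
  have hQle : (n:ℝ) * σhat2
      ≤ ∑ t, (x t - ∑ l, A l * h l t) * (x t - ∑ l, A l * h l t) := by
    rw [QA, huu, hQhat_val]
    linarith [hBMB]
  rw [hΛeq A σ2, hΛeq Ahat σhat2, hQhat_val]
  exact analytic_aux (n:ℝ) σhat2 σ2 _ hn hσhat2pos hσ2 hQle
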